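/- Let Σ be a finite relational signature, K a finite set of constants, G a finite tabloid over Σ and K, and T the undirected unraveling of G from any node of G. Then guarded bisimilarity ∼_g has finite index on the set of guarded tuples of 𝔄(T): there are only finitely many ∼_g-equivalence classes of guarded tuples (tuples of pairwise distinct elements whose set of components is a guarded set) of the structure 𝔄(T). -/

import Mathlib

open FirstOrder

namespace GFPaper

variable {L : FirstOrder.Language} {M N : Type*} {K V : Type*}

/-! ### Guarded sets, guarded tuples, partial isomorphisms, guarded bisimulations -/

/-- A guarded set of a `Σ`-structure is a nonempty (finite) subset contained in the set of
components of some tuple belonging to some relation of the structure. -/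
def IsGuardedSet (SM : L.Structure M) (B : Set M) : Prop :=
  B.Nonempty ∧ ∃ (n : ℕ) (R : L.Relations n) (a : Fin n → M),
    SM.RelMap R a ∧ B ⊆ Set.range a

/-- A guarded tuple is a tuple of pairwise distinct elements whose set of components is
a guarded set. -/
def IsGuardedTuple (SM : L.Structure M) {k : ℕ} (a : Fin k → M) : Prop :=
  Function.Injective a ∧ IsGuardedSet SM (Set.range a)

/-- A partial isomorphism between two `Σ`-structures: an injective map between finite subsets
preserving and reflecting all atomic relations.  The function `toFun` is total, but only its
restriction to `dom` is meaningful. -/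
structure PartialIso (SM : L.Structure M) (SN : L.Structure N) where
  dom : Set M
  finite_dom : dom.Finite
  toFun : M → N
  injOn : Set.InjOn toFun dom
  rel_iff : ∀ {n : ℕ} (R : L.Relations n) (a : Fin n → M), (∀ i, a i ∈ dom) →
    (SM.RelMap R a ↔ SN.RelMap R (fun i => toFun (a i)))

/-- The range of a partial isomorphism. -/
def PartialIso.rng {SM : L.Structure M} {SN : L.Structure N} (α : PartialIso SM SN) : Set N :=
  α.toFun '' α.dom

/-- A guarded bisimulation between two `Σ`-structures: a nonempty family of partial
isomorphisms between finite subsets satisfying the back-and-forth conditions over guarded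
sets. -/
structure GuardedBisim (SM : L.Structure M) (SN : L.Structure N) where
  Z : Set (PartialIso SM SN)
  nonempty : Z.Nonempty
  forth : ∀ α ∈ Z, ∀ B₀ : Set M, IsGuardedSet SM B₀ →
    ∃ γ ∈ Z, B₀ ⊆ γ.dom ∧ ∀ x ∈ α.dom ∩ γ.dom, α.toFun x = γ.toFun x
  back : ∀ α ∈ Z, ∀ B₁ : Set N, IsGuardedSet SN B₁ →
    ∃ γ ∈ Z, B₁ ⊆ γ.rng ∧ ∀ x ∈ α.dom, ∀ y ∈ γ.dom, α.toFun x = γ.toFun y → x = y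

/-- `𝔄₀,ā ∼_g 𝔄₁,b̄` : some guarded bisimulation contains the map `ā ↦ b̄`. -/
def GBisimTuple (SM : L.Structure M) (SN : L.Structure N) {k : ℕ}
    (a : Fin k → M) (b : Fin k → N) : Prop :=
  ∃ (Z : GuardedBisim SM SN) (α : PartialIso SM SN), α ∈ Z.Z ∧
    α.dom = Set.range a ∧ ∀ i, α.toFun (a i) = b i

/-- Guarded bisimilarity has finite index on the guarded tuples of a structure:
there is a finite set of guarded tuples such that every guarded tuple is guarded bisimilar
to one of them. -/
def FiniteGBisimIndex (SM : L.Structure M) : Prop :=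
  ∃ S : Set (Σ k : ℕ, Fin k → M), S.Finite ∧
    ∀ ⦃k : ℕ⦄ (a : Fin k → M), IsGuardedTuple SM a →
      ∃ b : Fin k → M, (⟨k, b⟩ : Σ k : ℕ, Fin k → M) ∈ S ∧
        IsGuardedTuple SM b ∧ GBisimTuple SM SM a b

/-! ### Undirected unraveling and undirected bisimulation -/

/-- `t` extends `s` by one edge (i.e. `s` is obtained from `t` by deleting its last node). -/
def ExtendsBy (G : SimpleGraph V) (v₀ : V) (s t : Σ u : V, G.Walk v₀ u) : Prop :=
  ∃ h : G.Adj s.1 t.1, t.2 = s.2.concat h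

/-- The undirected unraveling of a graph `G` from a node `v₀`: nodes are the finite walks
of `G` starting at `v₀`, and edges join each walk of positive length to the walk obtained
by deleting its last node. -/
def unraveling (G : SimpleGraph V) (v₀ : V) : SimpleGraph (Σ u : V, G.Walk v₀ u) where
  Adj s t := ExtendsBy G v₀ s t ∨ ExtendsBy G v₀ t s
  symm := ⟨fun _ _ h => h.symm⟩
  loopless := ⟨fun s h => by
    rcases h with ⟨h, _⟩ | ⟨h, _⟩ <;> exact G.irrefl h⟩

/-- The projection sending a node of the unraveling (a walk) to its terminal node. -/
def unravelingProj (G : SimpleGraph V) (v₀ : V) : (Σ u : V, G.Walk v₀ u) → V :=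
  fun s => s.1

/-- An undirected bisimulation between node-labelled undirected graphs. -/
def IsUndirectedBisim {V₀ V₁ Λ : Type*} (G₀ : SimpleGraph V₀) (G₁ : SimpleGraph V₁)
    (ℓ₀ : V₀ → Λ) (ℓ₁ : V₁ → Λ) (Z : Set (V₀ × V₁)) : Prop :=
  ∀ p ∈ Z, ℓ₀ p.1 = ℓ₁ p.2 ∧
    (∀ w₀, G₀.Adj p.1 w₀ → ∃ w₁, G₁.Adj p.2 w₁ ∧ (w₀, w₁) ∈ Z) ∧
    (∀ w₁, G₁.Adj p.2 w₁ → ∃ w₀, G₀.Adj p.1 w₀ ∧ (w₀, w₁) ∈ Z)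

/-! ### Tabloids -/

/-- A tabloid over a relational signature `L` and a set `K` of constant names: an undirected
graph where every node `v` carries a set `consts v ⊆ K` of constants and an atomic type
over `consts v`, encoded as the collection `rel v` of atomic facts over `consts v`; the
types of adjacent nodes agree over their common constants. -/
structure Tabloid (L : FirstOrder.Language) (K : Type*) (V : Type*) where
  graph : SimpleGraph V
  consts : V → Set K
  rel : ∀ (_v : V) {n : ℕ}, L.Relations n → (Fin n → K) → Prop
  rel_mem : ∀ (v : V) {n : ℕ} (R : L.Relations n) (c : Fin n → K),
    rel v R c → ∀ i, c i ∈ consts v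
  compat : ∀ (v w : V), graph.Adj v w → ∀ {n : ℕ} (R : L.Relations n) (c : Fin n → K),
    (∀ i, c i ∈ consts v ∩ consts w) → (rel v R c ↔ rel w R c)

namespace Tabloid

variable (T : Tabloid L K V)

/-- The pairs `(v, c)` with `v` a node and `c` one of its constants. -/
def Pairs : Type _ := {q : V × K // q.2 ∈ T.consts q.1}

/-- The relation `(v,c) ≈ (v',c')` iff `c = c'` and `c` belongs to the constants of every
node on the (unique, when the tabloid is a tree) path connecting `v` and `v'`. -/
def keq (p q : T.Pairs) : Prop :=
  p.1.2 = q.1.2 ∧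
    ∀ w : T.graph.Walk p.1.1 q.1.1, w.IsPath → ∀ z ∈ w.support, p.1.2 ∈ T.consts z

/-- The set of nodes `v` witnessing simultaneously the classes `[v_i, c_i]`, i.e. such that
`c_i ∈ K_v` and `[v, c_i] = [v_i, c_i]` for all `i`. -/
def classSet {n : ℕ} (p : Fin n → T.Pairs) : Set V :=
  {v | ∀ i, ∃ h : (p i).1.2 ∈ T.consts v,
    Quot.mk T.keq ⟨((v, (p i).1.2) : V × K), h⟩ = Quot.mk T.keq (p i)}

/-- The structure `𝔄(T)` associated to a (tree) tabloid: the universe is the set of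
`≈`-classes `[v,c]`, and a tuple satisfies a relation iff some single node witnesses all
classes and its atomic type contains the corresponding fact. -/
def AT [L.IsRelational] : L.Structure (Quot T.keq) where
  funMap := fun f _ => isEmptyElim f
  RelMap := fun {n} R x =>
    ∃ (v : V) (c : Fin n → K) (h : ∀ i, c i ∈ T.consts v),
      (∀ i, Quot.mk T.keq ⟨((v, c i) : V × K), h i⟩ = x i) ∧ T.rel v R c

/-- The undirected unraveling of a tabloid from a node: the unraveling of the underlying
graph, each walk carrying the labels of its terminal node. -/
def unravel (v₀ : V) : Tabloid L K (Σ u : V, T.graph.Walk v₀ u) where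
  graph := unraveling T.graph v₀
  consts := fun s => T.consts s.1
  rel := fun s => T.rel s.1
  rel_mem := fun s _ R c h i => T.rel_mem s.1 R c h i
  compat := by
    rintro s t (⟨h, _⟩ | ⟨h, _⟩) n R c hc
    · exact T.compat s.1 t.1 h R c hc
    · exact (T.compat t.1 s.1 h R c (fun i => ⟨(hc i).2, (hc i).1⟩)).symm

/-- An isomorphism of a tabloid onto itself: a graph automorphism preserving both labels. -/
structure Auto where
  toEquiv : V ≃ V
  adj_iff : ∀ z z', T.graph.Adj z z' ↔ T.graph.Adj (toEquiv z) (toEquiv z')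
  consts_eq : ∀ z, T.consts (toEquiv z) = T.consts z
  rel_iff : ∀ (z : V) {n : ℕ} (R : L.Relations n) (c : Fin n → K),
    T.rel (toEquiv z) R c ↔ T.rel z R c

end Tabloid

/-! ### The tabloid built from a finite model -/

/-- `χ` is the graph of a function. -/
def IsFunGraph (χ : Set (M × K)) : Prop :=
  ∀ ⦃a b b'⦄, (a, b) ∈ χ → (a, b') ∈ χ → b = b'

/-- `χ` is the graph of an injective (partial) function. -/
def IsInjGraph (χ : Set (M × K)) : Prop :=
  ∀ ⦃a a' b⦄, (a, b) ∈ χ → (a', b) ∈ χ → a = a'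

/-- The vertices of the tabloid built from a structure: injections `χ : A → K` with `A`
a guarded set, encoded via their graphs. -/
def ChiVertex (SM : L.Structure M) (K : Type*) : Type _ :=
  {χ : Set (M × K) // IsFunGraph χ ∧ IsInjGraph χ ∧ IsGuardedSet SM {a | ∃ b, (a, b) ∈ χ}}

/-- The constants of the vertex `χ`: the range of `χ`. -/
def chiConsts {SM : L.Structure M} (χ : ChiVertex SM K) : Set K :=
  {b | ∃ a, (a, b) ∈ χ.1}

/-- The atomic type of the vertex `χ`: the image under `χ` of the atomic type of its
domain in the structure. -/
def chiRel {SM : L.Structure M} (χ : ChiVertex SM K) {n : ℕ}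
    (R : L.Relations n) (c : Fin n → K) : Prop :=
  ∃ a : Fin n → M, (∀ i, (a i, c i) ∈ χ.1) ∧ SM.RelMap R a

/-- Adjacency of vertices: `χ ∪ χ'` is an injective function (and `χ ≠ χ'`). -/
def chiAdj {SM : L.Structure M} (χ χ' : ChiVertex SM K) : Prop :=
  χ ≠ χ' ∧ IsFunGraph (χ.1 ∪ χ'.1) ∧ IsInjGraph (χ.1 ∪ χ'.1)

/-! ### The guarded fragment of first-order logic -/

/-- Formulas of the guarded fragment of first-order logic over a relational signature `L`,
with variables drawn from `ℕ`: atomic formulas (including equalities), Boolean connectives,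
and guarded quantification `∃ȳ (R(x̄ȳ) ∧ φ)` and `∀ȳ (R(x̄ȳ) → φ)`. -/
inductive GFormula (L : FirstOrder.Language) : Type _ where
  | equal : ℕ → ℕ → GFormula L
  | rel : ∀ {n : ℕ}, L.Relations n → (Fin n → ℕ) → GFormula L
  | not : GFormula L → GFormula L
  | and : GFormula L → GFormula L → GFormula L
  | or : GFormula L → GFormula L → GFormula L
  | exGuard : ∀ {n : ℕ}, L.Relations n → (Fin n → ℕ) → Set ℕ → GFormula L → GFormula L
  | allGuard : ∀ {n : ℕ}, L.Relations n → (Fin n → ℕ) → Set ℕ → GFormula L → GFormula L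

namespace GFormula

/-- The free variables of a formula. -/
def free : GFormula L → Set ℕ
  | equal i j => {i, j}
  | rel _ ts => Set.range ts
  | not φ => φ.free
  | and φ ψ => φ.free ∪ ψ.free
  | or φ ψ => φ.free ∪ ψ.free
  | exGuard _ ts ys φ => (Set.range ts ∪ φ.free) \ ys
  | allGuard _ ts ys φ => (Set.range ts ∪ φ.free) \ ys

/-- Well-formedness for the guarded fragment: in every guarded quantification
`∃ȳ (R(x̄ȳ) ∧ φ)` resp. `∀ȳ (R(x̄ȳ) → φ)` the guard atom contains all free variables
of `φ` as well as all quantified variables. -/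
def IsGF : GFormula L → Prop
  | equal _ _ => True
  | rel _ _ => True
  | not φ => φ.IsGF
  | and φ ψ => φ.IsGF ∧ ψ.IsGF
  | or φ ψ => φ.IsGF ∧ ψ.IsGF
  | exGuard _ ts ys φ => φ.free ⊆ Set.range ts ∧ ys ⊆ Set.range ts ∧ φ.IsGF
  | allGuard _ ts ys φ => φ.free ⊆ Set.range ts ∧ ys ⊆ Set.range ts ∧ φ.IsGF

/-- Satisfaction of a guarded formula in a structure under a variable assignment. -/
def Sat (SM : L.Structure M) : GFormula L → (ℕ → M) → Prop
  | equal i j, β => β i = β j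
  | rel R ts, β => SM.RelMap R (fun i => β (ts i))
  | not φ, β => ¬ Sat SM φ β
  | and φ ψ, β => Sat SM φ β ∧ Sat SM ψ β
  | or φ ψ, β => Sat SM φ β ∨ Sat SM ψ β
  | exGuard R ts ys φ, β => ∃ β' : ℕ → M, (∀ x ∉ ys, β' x = β x) ∧
      SM.RelMap R (fun i => β' (ts i)) ∧ Sat SM φ β'
  | allGuard R ts ys φ, β => ∀ β' : ℕ → M, (∀ x ∉ ys, β' x = β x) →
      SM.RelMap R (fun i => β' (ts i)) → Sat SM φ β'

/-- Every subformula of `φ` has at most `n` free variables. -/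
def WidthLE (n : ℕ) : GFormula L → Prop
  | equal i j => (({i, j} : Set ℕ)).ncard ≤ n
  | rel _ ts => (Set.range ts).ncard ≤ n
  | not φ => φ.WidthLE n
  | and φ ψ => (φ.free ∪ ψ.free).ncard ≤ n ∧ φ.WidthLE n ∧ ψ.WidthLE n
  | or φ ψ => (φ.free ∪ ψ.free).ncard ≤ n ∧ φ.WidthLE n ∧ ψ.WidthLE n
  | exGuard _ ts _ φ => (Set.range ts ∪ φ.free).ncard ≤ n ∧ φ.WidthLE n
  | allGuard _ ts _ φ => (Set.range ts ∪ φ.free).ncard ≤ n ∧ φ.WidthLE n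

end GFormula


/-! ### Auxiliary development for Statement 10 -/

section Unravel

open SimpleGraph

variable {V : Type*} {Γ : SimpleGraph V} {v₀ : V}

local notation "W" => Σ u : V, Γ.Walk v₀ u

noncomputable local instance : DecidableEq (Σ u : V, Γ.Walk v₀ u) := Classical.decEq _

lemma ExtendsBy.length {s t : W} (h : ExtendsBy Γ v₀ s t) :
    t.2.length = s.2.length + 1 := by
  obtain ⟨h, ht⟩ := h
  rw [ht, SimpleGraph.Walk.length_concat]

lemma ExtendsBy.parent_unique {s s' t : W} (h : ExtendsBy Γ v₀ s t)
    (h' : ExtendsBy Γ v₀ s' t) : s = s' := by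
  obtain ⟨h1, ht1⟩ := h
  obtain ⟨h2, ht2⟩ := h'
  have hrev : (Walk.cons h1.symm s.2.reverse : Γ.Walk t.1 v₀)
      = Walk.cons h2.symm s'.2.reverse := by
    rw [← Walk.reverse_concat, ← Walk.reverse_concat, ← ht1, ← ht2]
    all_goals assumption
  have hv : s.1 = s'.1 := by
    have := congrArg (fun w => Walk.getVert w 1) hrev
    simpa using this
  obtain ⟨u1, w1⟩ := s
  obtain ⟨u2, w2⟩ := s'
  dsimp at hv
  subst hv
  have hw : w1.reverse = w2.reverse := by
    injection hrev
  have : w1 = w2 := by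
    have := congrArg Walk.reverse hw
    simpa using this
  rw [this]

lemma unraveling_adj_cases {s t : W} (h : (unraveling Γ v₀).Adj s t) :
    ExtendsBy Γ v₀ s t ∨ ExtendsBy Γ v₀ t s := h

lemma unraveling_adj_of_extendsBy {s t : W} (h : ExtendsBy Γ v₀ s t) :
    (unraveling Γ v₀).Adj s t := Or.inl h

lemma unraveling_isAcyclic : (unraveling Γ v₀).IsAcyclic := by
  intro z c hc
  classical
  -- pick a vertex of maximal length on the cycle
  obtain ⟨w, hwarg⟩ : ∃ w, w ∈ c.support.argmax (fun y => y.2.length) := by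
    rcases hm : c.support.argmax (fun y => y.2.length) with _ | w
    · rw [List.argmax_eq_none] at hm
      exact absurd hm (by simp)
    · exact ⟨w, hm ▸ rfl⟩
  have hwmem : w ∈ c.support := List.argmax_mem hwarg
  have hwmax : ∀ y ∈ c.support, y.2.length ≤ w.2.length :=
    fun y hy => List.le_of_mem_argmax hy hwarg
  set c' := c.rotate w hwmem with hc'
  have hc'cyc : c'.IsCycle := hc.rotate hwmem
  have hsub : ∀ y ∈ c'.support, y ∈ c.support := by
    intro y hy
    rw [Walk.support_eq_cons, List.mem_cons] at hy
    rcases hy with rfl | hy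
    · exact hwmem
    · have := (Walk.support_rotate c w hwmem).mem_iff.mp hy
      rw [Walk.support_eq_cons c]
      exact List.mem_cons_of_mem _ this
  clear_value c'
  clear hc' hc hwmem hwarg
  cases c' with
  | nil => exact hc'cyc.ne_nil rfl
  | cons h p =>
    rename_i x
    obtain ⟨y, q, h₂, rfl⟩ : ∃ (y : W) (q : (unraveling Γ v₀).Walk x y)
        (h₂ : (unraveling Γ v₀).Adj y w), p = q.concat h₂ := by
      cases p with
      | nil =>
        exfalso
        have := hc'cyc.three_le_length
        simp at this
      | cons h' p' =>
        obtain ⟨y, q, h₂, hq⟩ := Walk.exists_cons_eq_concat h' p'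
        exact ⟨y, q, h₂, hq⟩
    have hxmem : x ∈ (Walk.cons h (q.concat h₂)).support := by
      simp [Walk.support_cons, Walk.support_concat]
    have hymem : y ∈ (Walk.cons h (q.concat h₂)).support := by
      simp only [Walk.support_cons, Walk.support_concat, List.mem_cons, List.concat_eq_append,
        List.mem_append, List.mem_singleton]
      right; left; exact Walk.end_mem_support q
    have hx : ExtendsBy Γ v₀ x w := by
      rcases unraveling_adj_cases h with h1 | h1
      · exfalso
        have := h1.length
        have hle := hwmax x (hsub x hxmem)
        omega
      · exact h1
    have hy : ExtendsBy Γ v₀ y w := by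
      rcases unraveling_adj_cases h₂ with h1 | h1
      · exact h1
      · exfalso
        have := h1.length
        have hle := hwmax y (hsub y hymem)
        omega
    have hxy : x = y := hx.parent_unique hy
    subst hxy
    have hq : q.IsPath := by
      rw [Walk.isPath_def]
      have hnd := hc'cyc.support_nodup
      rw [Walk.support_cons, Walk.support_concat] at hnd
      simp only [List.tail_cons] at hnd
      exact hnd.of_append_left
    have hqnil : q = Walk.nil := by
      have := SimpleGraph.Path.loop_eq (⟨q, hq⟩ : (unraveling Γ v₀).Path x x)
      exact congrArg Subtype.val this
    subst hqnil
    have := hc'cyc.three_le_length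
    simp at this

/-- Projection of the unraveling onto the base graph, as a graph homomorphism. -/
def projHom : unraveling Γ v₀ →g Γ where
  toFun := Sigma.fst
  map_rel' := by
    rintro s t (⟨h, _⟩ | ⟨h, _⟩)
    · exact h
    · exact h.symm

/-- The canonical walk from the root of the unraveling to any node. -/
def climbAux {u : V} : ∀ {x : V} (w : Γ.Walk u x),
    (unraveling Γ u).Walk ⟨u, Walk.nil⟩ ⟨x, w⟩ :=
  fun {x} w => Walk.concatRec
    (motive := fun a b p => (unraveling Γ a).Walk ⟨a, Walk.nil⟩ ⟨b, p⟩)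
    (fun {a} => Walk.nil)
    (fun {a b c} p h ih => ih.concat (unraveling_adj_of_extendsBy ⟨h, rfl⟩)) w

def climb (s : W) : (unraveling Γ v₀).Walk ⟨v₀, Walk.nil⟩ s := climbAux s.2

/-- A canonical path between any two nodes of the unraveling. -/
noncomputable def pathBetween (s t : W) : (unraveling Γ v₀).Walk s t :=
  ((climb s).reverse.append (climb t)).bypass

lemma pathBetween_isPath (s t : W) : (pathBetween s t).IsPath :=
  Walk.bypass_isPath _

lemma walk_eq_of_isPath {s t : W} {p q : (unraveling Γ v₀).Walk s t}
    (hp : p.IsPath) (hq : q.IsPath) : p = q :=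
  congrArg Subtype.val
    (SimpleGraph.isAcyclic_iff_path_unique.mp unraveling_isAcyclic ⟨p, hp⟩ ⟨q, hq⟩)

/-- Extending a node of the unraveling along a walk of the base graph yields a walk
in the unraveling. -/
def extendWalk : (s : W) → {x : V} → (w : Γ.Walk s.1 x) →
    (unraveling Γ v₀).Walk s ⟨x, s.2.append w⟩
  | s, _, Walk.nil => Walk.nil.copy rfl (by cases s with | mk u w => simp)
  | s, x, Walk.cons h w₂ =>
    (Walk.cons (unraveling_adj_of_extendsBy ⟨h, rfl⟩ : (unraveling Γ v₀).Adj s ⟨_, s.2.concat h⟩)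
      (extendWalk ⟨_, s.2.concat h⟩ w₂)).copy rfl (by rw [Walk.concat_append])

theorem extendWalk_support_fst : ∀ (s : W) {x : V} (w : Γ.Walk s.1 x) (z : W),
    z ∈ (extendWalk s w).support → z.1 ∈ w.support
  | s, _, Walk.nil, z, hz => by
    simp only [extendWalk, Walk.support_copy, Walk.support_nil, List.mem_singleton] at hz
    subst hz
    simp
  | s, x, Walk.cons h w₂, z, hz => by
    simp only [extendWalk, Walk.support_copy, Walk.support_cons, List.mem_cons] at hz
    rcases hz with rfl | hz
    · simp
    · have := extendWalk_support_fst ⟨_, s.2.concat h⟩ w₂ z hz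
      simp only [Walk.support_cons, List.mem_cons]
      exact Or.inr this

theorem extendWalk_support_fst' : ∀ (s : W) {x : V} (w : Γ.Walk s.1 x) (y : V),
    y ∈ w.support → ∃ z ∈ (extendWalk s w).support, z.1 = y
  | s, _, Walk.nil, y, hy => by
    simp only [Walk.support_nil, List.mem_singleton] at hy
    subst hy
    exact ⟨s, by simp [extendWalk, Walk.support_copy], rfl⟩
  | s, x, Walk.cons h w₂, y, hy => by
    simp only [Walk.support_cons, List.mem_cons] at hy
    rcases hy with rfl | hy
    · exact ⟨s, by simp [extendWalk, Walk.support_copy], rfl⟩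
    · obtain ⟨z, hz, hz'⟩ := extendWalk_support_fst' ⟨_, s.2.concat h⟩ w₂ y hy
      exact ⟨z, by simp [extendWalk, Walk.support_copy, Walk.support_cons, hz], hz'⟩

theorem extendWalk_length_le : ∀ (s : W) {x : V} (w : Γ.Walk s.1 x) (z : W),
    z ∈ (extendWalk s w).support → s.2.length ≤ z.2.length
  | s, _, Walk.nil, z, hz => by
    simp only [extendWalk, Walk.support_copy, Walk.support_nil, List.mem_singleton] at hz
    subst hz
    exact le_rfl
  | s, x, Walk.cons h w₂, z, hz => by
    simp only [extendWalk, Walk.support_copy, Walk.support_cons, List.mem_cons] at hz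
    rcases hz with rfl | hz
    · exact le_rfl
    · have := extendWalk_length_le ⟨_, s.2.concat h⟩ w₂ z hz
      simp only [Walk.length_concat] at this
      omega

theorem extendWalk_isPath : ∀ (s : W) {x : V} (w : Γ.Walk s.1 x), (extendWalk s w).IsPath
  | s, _, Walk.nil => by
    simp only [extendWalk]
    rw [Walk.isPath_copy]
    exact Walk.IsPath.nil
  | s, x, Walk.cons h w₂ => by
    simp only [extendWalk]
    rw [Walk.isPath_copy, Walk.cons_isPath_iff]
    refine ⟨extendWalk_isPath ⟨_, s.2.concat h⟩ w₂, fun hmem => ?_⟩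
    have := extendWalk_length_le ⟨_, s.2.concat h⟩ w₂ s hmem
    simp only [Walk.length_concat] at this
    omega

end Unravel

section TabloidAux

variable {L : FirstOrder.Language} {K V : Type*}

/-- The constant name of a `≈`-class; well-defined since `keq` preserves the constant. -/
def Tabloid.constOf (T : Tabloid L K V) : Quot T.keq → K :=
  Quot.lift (fun p => p.1.2) (fun _ _ h => h.1)

lemma Tabloid.const_eq (T : Tabloid L K V) {p q : T.Pairs}
    (h : Quot.mk T.keq p = Quot.mk T.keq q) : p.1.2 = q.1.2 := congrArg T.constOf h

/-- Atomic facts transfer along walks on which all constants are everywhere defined. -/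
lemma Tabloid.rel_transfer (T : Tabloid L K V) {n : ℕ} (R : L.Relations n) (c : Fin n → K)
    {a b : V} (w : T.graph.Walk a b) (h : ∀ z ∈ w.support, ∀ i, c i ∈ T.consts z) :
    T.rel a R c ↔ T.rel b R c := by
  induction w with
  | nil => exact Iff.rfl
  | cons hadj p ih =>
    rename_i a b₁ b₂
    have h1 : ∀ i, c i ∈ T.consts a ∩ T.consts b₁ := by
      intro i
      exact ⟨h a (by simp [SimpleGraph.Walk.support_cons]) i,
        h b₁ (by simp [SimpleGraph.Walk.support_cons, SimpleGraph.Walk.start_mem_support]) i⟩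
    refine (T.compat a b₁ hadj R c h1).trans (ih ?_)
    intro z hz i
    exact h z (by simp [SimpleGraph.Walk.support_cons]; right; exact hz) i

end TabloidAux

section UnravelTabloid

open SimpleGraph

variable {L : FirstOrder.Language} {K V : Type*} (G : Tabloid L K V) (v₀ : V)

local notation "W" => Σ u : V, G.graph.Walk v₀ u

noncomputable local instance : DecidableEq (Σ u : V, G.graph.Walk v₀ u) := Classical.decEq _

lemma unravel_keq_equivalence : Equivalence (G.unravel v₀).keq := by
  constructor
  · intro p
    refine ⟨rfl, fun w hw z hz => ?_⟩
    have hwnil : w = Walk.nil := by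
      have := SimpleGraph.Path.loop_eq (⟨w, hw⟩ : (G.unravel v₀).graph.Path p.1.1 p.1.1)
      exact congrArg Subtype.val this
    subst hwnil
    simp only [Walk.support_nil, List.mem_singleton] at hz
    subst hz
    exact p.2
  · intro p q h
    refine ⟨h.1.symm, fun w hw z hz => ?_⟩
    have := h.2 w.reverse hw.reverse z (by simpa [Walk.support_reverse] using hz)
    rwa [h.1] at this
  · intro p q r h1 h2
    refine ⟨h1.1.trans h2.1, fun w hw z hz => ?_⟩
    have hp1 := pathBetween_isPath (Γ := G.graph) (v₀ := v₀) p.1.1 q.1.1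
    have hp2 := pathBetween_isPath (Γ := G.graph) (v₀ := v₀) q.1.1 r.1.1
    set p₁ := pathBetween (Γ := G.graph) (v₀ := v₀) p.1.1 q.1.1
    set p₂ := pathBetween (Γ := G.graph) (v₀ := v₀) q.1.1 r.1.1
    have hbp : (p₁.append p₂).bypass.IsPath := Walk.bypass_isPath _
    have hw' : w = (p₁.append p₂).bypass := walk_eq_of_isPath hw hbp
    subst hw'
    have hz' := Walk.support_bypass_subset _ hz
    replace hz' := (Walk.mem_support_append_iff (p := p₁) (p' := p₂)).mp hz'
    rcases hz' with hz' | hz'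
    · exact h1.2 p₁ hp1 z hz'
    · have := h2.2 p₂ hp2 z hz'
      rwa [← h1.1] at this

lemma unravel_quot_eq {p q : (G.unravel v₀).Pairs} :
    Quot.mk (G.unravel v₀).keq p = Quot.mk (G.unravel v₀).keq q ↔ (G.unravel v₀).keq p q := by
  rw [Quot.eq]
  exact (unravel_keq_equivalence G v₀).eqvGen_iff

lemma unravel_keq_iff_support {s v : W} (p : (unraveling G.graph v₀).Walk s v) (hp : p.IsPath)
    (c : K) (hcs : c ∈ G.consts s.1) (hcv : c ∈ G.consts v.1) :
    (G.unravel v₀).keq ⟨(s, c), hcs⟩ ⟨(v, c), hcv⟩ ↔ ∀ z ∈ p.support, c ∈ G.consts z.1 := by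
  constructor
  · intro h z hz
    exact h.2 p hp z hz
  · intro h
    refine ⟨rfl, fun w hw z hz => ?_⟩
    have hw' : w = p := walk_eq_of_isPath hw hp
    subst hw'
    exact h z hz

/-- The mirror of a node `v` across a pair `s`, `s'` of nodes with equal projection:
extend `s'` by the projection of the path from `s` to `v`. -/
noncomputable abbrev mirrorNode (s' : W) {s v : W} (hss : s.1 = s'.1)
    (p : (unraveling G.graph v₀).Walk s v) : W :=
  ⟨v.1, s'.2.append ((p.map (projHom)).copy hss rfl)⟩

lemma mirror {s s' v : W} (hss : s.1 = s'.1) (p : (unraveling G.graph v₀).Walk s v)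
    (hp : p.IsPath) (c : K) (hcs : c ∈ G.consts s.1) (hcv : c ∈ G.consts v.1)
    (hcs' : c ∈ G.consts s'.1) :
    (Quot.mk (G.unravel v₀).keq ⟨(s, c), hcs⟩ = Quot.mk (G.unravel v₀).keq ⟨(v, c), hcv⟩) ↔
    (Quot.mk (G.unravel v₀).keq ⟨(s', c), hcs'⟩ =
      Quot.mk (G.unravel v₀).keq ⟨(mirrorNode G v₀ s' hss p, c), hcv⟩) := by
  refine (unravel_quot_eq G v₀).trans (Iff.trans ?_ (unravel_quot_eq G v₀).symm)
  have hq := extendWalk_isPath s' ((p.map (projHom)).copy hss rfl)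
  have h2 := unravel_keq_iff_support G v₀
    (extendWalk s' ((p.map (projHom)).copy hss rfl)) hq c hcs' hcv
  have hsupp : ((p.map (projHom : unraveling G.graph v₀ →g G.graph)).copy hss rfl).support
      = p.support.map Sigma.fst := by
    exact (Walk.support_copy ..).trans (Walk.support_map ..)
  have hmain : (∀ z ∈ p.support, c ∈ G.consts z.1) ↔
      (∀ z ∈ (extendWalk s' ((p.map (projHom)).copy hss rfl)).support, c ∈ G.consts z.1) := by
    constructor
    · intro h z hz
      have hz1 := extendWalk_support_fst s' _ z hz
      rw [hsupp, List.mem_map] at hz1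
      obtain ⟨y, hy, hy'⟩ := hz1
      rw [← hy']
      exact h y hy
    · intro h y hy
      have hmem : y.1 ∈ ((p.map (projHom : unraveling G.graph v₀ →g G.graph)).copy hss
          rfl).support := by
        rw [hsupp, List.mem_map]
        exact ⟨y, hy, rfl⟩
      obtain ⟨z, hz, hz'⟩ := extendWalk_support_fst' s' _ y.1 hmem
      rw [← hz']
      exact h z hz
  exact (unravel_keq_iff_support G v₀ p hp c hcs hcv).trans (hmain.trans h2.symm)

end UnravelTabloid

section Main

open SimpleGraph

variable {L : FirstOrder.Language} [L.IsRelational] {K V : Type*} [Finite K] [Finite V]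
  (G : Tabloid L K V) (v₀ : V)

local notation "W" => Σ u : V, G.graph.Walk v₀ u

/-- The element `[s, c]` of `𝔄(T)`. -/
abbrev elemAt (s : W) (c : K) (h : c ∈ G.consts s.1) : Quot (G.unravel v₀).keq :=
  Quot.mk (G.unravel v₀).keq ⟨(s, c), h⟩

lemma elemAt_const {s : W} {c : K} {h : c ∈ G.consts s.1} :
    (G.unravel v₀).constOf (elemAt G v₀ s c h) = c := rfl

lemma elemAt_inj {s t : W} {c c' : K} {h : c ∈ G.consts s.1} {h' : c' ∈ G.consts t.1}
    (he : elemAt G v₀ s c h = elemAt G v₀ t c' h') : c = c' :=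
  (G.unravel v₀).const_eq he

lemma elemAt_congr {s : W} {c c' : K} (h : c = c') {hc : c ∈ G.consts s.1}
    {hc' : c' ∈ G.consts s.1} : elemAt G v₀ s c hc = elemAt G v₀ s c' hc' := by
  subst h; rfl

lemma AT_relMap_iff {n : ℕ} (R : L.Relations n) (a : Fin n → Quot (G.unravel v₀).keq) :
    (G.unravel v₀).AT.RelMap R a ↔ ∃ (v : W) (c : Fin n → K) (h : ∀ i, c i ∈ G.consts v.1),
      (∀ i, elemAt G v₀ v (c i) (h i) = a i) ∧ G.rel v.1 R c := Iff.rfl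

lemma rel_of_relMap {n : ℕ} {R : L.Relations n} {a : Fin n → Quot (G.unravel v₀).keq}
    (hR : (G.unravel v₀).AT.RelMap R a) {t : W} {c : Fin n → K}
    (hc : ∀ i, c i ∈ G.consts t.1) (ha : ∀ i, elemAt G v₀ t (c i) (hc i) = a i) :
    G.rel t.1 R c := by
  obtain ⟨v, d, hd, hq, hrel⟩ := (AT_relMap_iff G v₀ R a).mp hR
  have hdc : d = c := funext fun i => (G.unravel v₀).const_eq ((hq i).trans (ha i).symm)
  subst hdc
  have hpath := pathBetween_isPath (Γ := G.graph) (v₀ := v₀) v t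
  have hkeq : ∀ i, (G.unravel v₀).keq ⟨(v, d i), hd i⟩ ⟨(t, d i), hc i⟩ :=
    fun i => (unravel_quot_eq G v₀).mp ((hq i).trans (ha i).symm)
  have hcond : ∀ z ∈ (pathBetween (Γ := G.graph) (v₀ := v₀) v t).support,
      ∀ i, d i ∈ (G.unravel v₀).consts z :=
    fun z hz i => (hkeq i).2 (pathBetween v t) hpath z hz
  exact ((G.unravel v₀).rel_transfer R d (pathBetween v t) hcond).mp hrel

lemma relMap_of_rel {n : ℕ} (R : L.Relations n) {t : W} {c : Fin n → K}
    (hc : ∀ i, c i ∈ G.consts t.1) (hrel : G.rel t.1 R c) :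
    (G.unravel v₀).AT.RelMap R (fun i => elemAt G v₀ t (c i) (hc i)) :=
  (AT_relMap_iff G v₀ R _).mpr ⟨t, c, hc, fun i => rfl, hrel⟩

open Classical in
/-- The underlying function of the partial isomorphism `[s,c] ↦ [s',c]` (`c ∈ C`). -/
noncomputable def mapFun (s s' : W) (hss : s.1 = s'.1) (C : Set K) :
    Quot (G.unravel v₀).keq → Quot (G.unravel v₀).keq := fun x =>
  if h : ∃ (c : K) (hc : c ∈ G.consts s.1), c ∈ C ∧ x = elemAt G v₀ s c hc then
    elemAt G v₀ s' h.choose (hss ▸ h.choose_spec.choose)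
  else x

lemma mapFun_elem (s s' : W) (hss : s.1 = s'.1) (C : Set K) {c : K}
    (hc : c ∈ G.consts s.1) (hc' : c ∈ G.consts s'.1) (hC : c ∈ C) :
    mapFun G v₀ s s' hss C (elemAt G v₀ s c hc) = elemAt G v₀ s' c hc' := by
  have h : ∃ (c₀ : K) (hc₀ : c₀ ∈ G.consts s.1), c₀ ∈ C ∧
      elemAt G v₀ s c hc = elemAt G v₀ s c₀ hc₀ := ⟨c, hc, hC, rfl⟩
  rw [mapFun, dif_pos h]
  obtain ⟨hC₀, heq⟩ := h.choose_spec.choose_spec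
  have hcc : c = h.choose := elemAt_inj G v₀ heq
  exact elemAt_congr G v₀ hcc.symm

/-- The partial isomorphism `[s,c] ↦ [s',c]` (`c ∈ C`) for nodes `s`, `s'` with the same
projection to the base tabloid. -/
noncomputable def pIso (s s' : W) (hss : s.1 = s'.1) (C : Set K) :
    PartialIso (G.unravel v₀).AT (G.unravel v₀).AT where
  dom := {x | ∃ (c : K) (hc : c ∈ G.consts s.1), c ∈ C ∧ x = elemAt G v₀ s c hc}
  finite_dom := by
    classical
    have hsub : {x | ∃ (c : K) (hc : c ∈ G.consts s.1), c ∈ C ∧ x = elemAt G v₀ s c hc} ⊆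
        Option.some ⁻¹' Set.range (fun c : K =>
          if hc : c ∈ G.consts s.1 then some (elemAt G v₀ s c hc) else none) := by
      rintro x ⟨c, hc, _, rfl⟩
      refine ⟨c, ?_⟩
      show (if hc : c ∈ G.consts s.1 then some (elemAt G v₀ s c hc) else none) = _
      rw [dif_pos hc]
    exact Set.Finite.subset
      (Set.Finite.preimage (Option.some_injective _).injOn (Set.finite_range _)) hsub
  toFun := mapFun G v₀ s s' hss C
  injOn := by
    rintro x ⟨c, hc, hC, rfl⟩ y ⟨e, he, heC, rfl⟩ hxy
    rw [mapFun_elem G v₀ s s' hss C hc (hss ▸ hc) hC,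
      mapFun_elem G v₀ s s' hss C he (hss ▸ he) heC] at hxy
    exact elemAt_congr G v₀ (elemAt_inj G v₀ hxy)
  rel_iff := by
    intro n R a ha
    choose c hc hC hx using ha
    have hfun : (fun i => mapFun G v₀ s s' hss C (a i)) =
        (fun i => elemAt G v₀ s' (c i) (hss ▸ hc i)) := funext fun i => by
      rw [hx i, mapFun_elem G v₀ s s' hss C (hc i) (hss ▸ hc i) (hC i)]
    constructor
    · intro hR
      have hrel : G.rel s.1 R c :=
        rel_of_relMap G v₀ hR hc (fun i => (hx i).symm)
      have hrel' : G.rel s'.1 R c := hss ▸ hrel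
      rw [hfun]
      exact relMap_of_rel G v₀ R (fun i => hss ▸ hc i) hrel'
    · intro hR
      rw [hfun] at hR
      have hrel' : G.rel s'.1 R c :=
        rel_of_relMap G v₀ hR (fun i => hss ▸ hc i) (fun i => rfl)
      have hrel : G.rel s.1 R c := hss.symm ▸ hrel'
      have : a = fun i => elemAt G v₀ s (c i) (hc i) := funext fun i => hx i
      rw [this]
      exact relMap_of_rel G v₀ R hc hrel

lemma pIso_dom (s s' : W) (hss : s.1 = s'.1) (C : Set K) :
    (pIso G v₀ s s' hss C).dom =
      {x | ∃ (c : K) (hc : c ∈ G.consts s.1), c ∈ C ∧ x = elemAt G v₀ s c hc} := rfl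

lemma pIso_toFun (s s' : W) (hss : s.1 = s'.1) (C : Set K) :
    (pIso G v₀ s s' hss C).toFun = mapFun G v₀ s s' hss C := rfl

lemma pIso_rng (s s' : W) (hss : s.1 = s'.1) (C : Set K) :
    (pIso G v₀ s s' hss C).rng =
      {x | ∃ (c : K) (hc : c ∈ G.consts s'.1), c ∈ C ∧ x = elemAt G v₀ s' c hc} := by
  ext x
  simp only [PartialIso.rng, Set.mem_image]
  constructor
  · rintro ⟨y, ⟨c, hc, hC, rfl⟩, rfl⟩
    exact ⟨c, hss ▸ hc, hC,
      mapFun_elem G v₀ s s' hss C hc (hss ▸ hc) hC⟩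
  · rintro ⟨c, hc', hC, rfl⟩
    exact ⟨elemAt G v₀ s c (hss.symm ▸ hc'), ⟨c, hss.symm ▸ hc', hC, rfl⟩,
      mapFun_elem G v₀ s s' hss C (hss.symm ▸ hc') hc' hC⟩

/-- The family of all partial isomorphisms `pIso s s' _ C` is a guarded bisimulation. -/
noncomputable def bigZ : GuardedBisim (G.unravel v₀).AT (G.unravel v₀).AT where
  Z := {α | ∃ (s s' : W) (hss : s.1 = s'.1) (C : Set K), α = pIso G v₀ s s' hss C}
  nonempty := ⟨pIso G v₀ ⟨v₀, Walk.nil⟩ ⟨v₀, Walk.nil⟩ rfl ∅,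
    ⟨v₀, Walk.nil⟩, ⟨v₀, Walk.nil⟩, rfl, ∅, rfl⟩
  forth := by
    rintro α ⟨s, s', hss, C, rfl⟩ B₀ ⟨hne, n, R, x, hR, hsub⟩
    obtain ⟨v, d, hd, hq, hrel⟩ := (AT_relMap_iff G v₀ R x).mp hR
    have hp := pathBetween_isPath (Γ := G.graph) (v₀ := v₀) s v
    refine ⟨pIso G v₀ v (mirrorNode G v₀ s' hss (pathBetween s v)) rfl (Set.range d),
      ⟨v, mirrorNode G v₀ s' hss (pathBetween s v), rfl, Set.range d, rfl⟩, ?_, ?_⟩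
    · intro b hb
      obtain ⟨i, hxi⟩ := hsub hb
      exact ⟨d i, hd i, ⟨i, rfl⟩, ((hq i).trans hxi).symm⟩
    · rintro y ⟨⟨c, hc, hC, rfl⟩, ⟨e, he, heC, hy2⟩⟩
      have hce : c = e := elemAt_inj G v₀ hy2
      subst hce
      have hmir := (mirror G v₀ hss (pathBetween s v) hp c hc he (hss ▸ hc)).mp hy2
      rw [pIso_toFun, pIso_toFun,
        mapFun_elem G v₀ s s' hss C hc (hss ▸ hc) hC, hy2,
        mapFun_elem G v₀ v (mirrorNode G v₀ s' hss (pathBetween s v)) rfl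
          (Set.range d) he he heC]
      exact hmir
  back := by
    rintro α ⟨s, s', hss, C, rfl⟩ B₁ ⟨hne, n, R, x, hR, hsub⟩
    obtain ⟨v', d, hd, hq, hrel⟩ := (AT_relMap_iff G v₀ R x).mp hR
    have hp := pathBetween_isPath (Γ := G.graph) (v₀ := v₀) s' v'
    refine ⟨pIso G v₀ (mirrorNode G v₀ s hss.symm (pathBetween s' v')) v' rfl (Set.range d),
      ⟨mirrorNode G v₀ s hss.symm (pathBetween s' v'), v', rfl, Set.range d, rfl⟩, ?_, ?_⟩
    · rw [pIso_rng]
      intro b hb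
      obtain ⟨i, hxi⟩ := hsub hb
      exact ⟨d i, hd i, ⟨i, rfl⟩, ((hq i).trans hxi).symm⟩
    · rintro y ⟨c, hc, hC, rfl⟩ z ⟨e, he, heC, rfl⟩ heq
      rw [pIso_toFun, pIso_toFun,
        mapFun_elem G v₀ s s' hss C hc (hss ▸ hc) hC,
        mapFun_elem G v₀ (mirrorNode G v₀ s hss.symm (pathBetween s' v')) v' rfl
          (Set.range d) he he heC] at heq
      have hce : c = e := elemAt_inj G v₀ heq
      subst hce
      exact (mirror G v₀ hss.symm (pathBetween s' v') hp c (hss ▸ hc) he hc).mp heq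

/-- A canonical node of the unraveling with the same projection as `v`. -/
noncomputable abbrev cwNode (v : W) : W := ⟨v.1, (Nonempty.intro v.2).some⟩

open Classical in
/-- An auxiliary function witnessing finiteness of the set of canonical elements. -/
noncomputable def reprFun : V × K → Option (Quot (G.unravel v₀).keq) := fun p =>
  if h : Nonempty (G.graph.Walk v₀ p.1) then
    if hc : p.2 ∈ G.consts p.1 then some (elemAt G v₀ ⟨p.1, h.some⟩ p.2 hc) else none
  else none

/-- The (finite) set of canonical elements of `𝔄(T)`. -/
noncomputable def canonSet : Set (Quot (G.unravel v₀).keq) :=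
  Option.some ⁻¹' Set.range (reprFun G v₀)

lemma canonSet_finite : (canonSet G v₀).Finite := by
  classical
  haveI : Finite (V × K) := by infer_instance
  exact Set.Finite.preimage (Option.some_injective _).injOn (Set.finite_range _)

lemma mem_canonSet (v : W) (c : K) (hc : c ∈ G.consts v.1) :
    elemAt G v₀ (cwNode G v₀ v) c hc ∈ canonSet G v₀ := by
  refine ⟨(v.1, c), ?_⟩
  rw [reprFun, dif_pos (Nonempty.intro v.2), dif_pos hc]

end Main

/-- **Lemma 2.** Let `G` be a finite tabloid over a finite relational
signature and a finite set of constants, and `T` its undirected unraveling from any node.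
Then guarded bisimilarity `∼_g` has finite index on the set of guarded tuples of `𝔄(T)`. -/
theorem finite_gbisim_index_of_unravel {L : FirstOrder.Language} [L.IsRelational]
    [Finite (Σ n : ℕ, L.Relations n)] {K V : Type*} [Finite K] [Finite V]
    (G : Tabloid L K V) (v₀ : V) :
    FiniteGBisimIndex (G.unravel v₀).AT := by
  classical
  have hA : {n : ℕ | Nonempty (L.Relations n)}.Finite := by
    refine (Set.finite_range (Sigma.fst : (Σ n : ℕ, L.Relations n) → ℕ)).subset ?_
    rintro n ⟨R⟩
    exact ⟨⟨n, R⟩, rfl⟩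
  obtain ⟨N, hN⟩ := hA.bddAbove
  refine ⟨{p : Σ k : ℕ, Fin k → Quot (G.unravel v₀).keq |
      p.1 ≤ N ∧ ∀ j, p.2 j ∈ canonSet G v₀}, ?_, ?_⟩
  · have hsub : {p : Σ k : ℕ, Fin k → Quot (G.unravel v₀).keq |
        p.1 ≤ N ∧ ∀ j, p.2 j ∈ canonSet G v₀} ⊆
        ⋃ k ∈ Set.Iic N, Sigma.mk k '' {b : Fin k → Quot (G.unravel v₀).keq |
          ∀ j, b j ∈ canonSet G v₀} := by
      rintro ⟨k, b⟩ ⟨hk, hb⟩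
      exact Set.mem_biUnion hk ⟨b, hb, rfl⟩
    refine Set.Finite.subset
      (Set.Finite.biUnion (Set.finite_Iic N) fun k _ => Set.Finite.image _ ?_) hsub
    have hpi : {b : Fin k → Quot (G.unravel v₀).keq | ∀ j, b j ∈ canonSet G v₀} =
        Set.pi Set.univ fun _ => canonSet G v₀ := by
      ext b
      simp [Set.mem_pi]
    rw [hpi]
    exact Set.Finite.pi fun _ => canonSet_finite G v₀
  · intro k a hga
    obtain ⟨ainj, hne, n, R, x, hR, hsub⟩ := hga
    obtain ⟨v, d, hd, hq, hrel⟩ := (AT_relMap_iff G v₀ R x).mp hR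
    choose i hi using fun j => hsub (Set.mem_range_self (f := a) j)
    have ha : ∀ j, a j = elemAt G v₀ v (d (i j)) (hd (i j)) :=
      fun j => ((hq (i j)).trans (hi j)).symm
    refine ⟨fun j => elemAt G v₀ (cwNode G v₀ v) (d (i j)) (hd (i j)),
      ⟨?_, ?_⟩, ⟨?_, ?_⟩, ?_⟩
    · -- k ≤ N
      have hinj : Function.Injective i := by
        intro j j' hjj
        apply ainj
        rw [← hi j, ← hi j', hjj]
      have h1 : k ≤ n := by
        have := Fintype.card_le_of_injective i hinj
        simpa using this
      have h2 : n ≤ N := hN ⟨R⟩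
      show k ≤ N
      omega
    · intro j
      exact mem_canonSet G v₀ v (d (i j)) (hd (i j))
    · -- injectivity of the representative tuple
      intro j j' hjj
      apply ainj
      rw [ha j, ha j']
      exact elemAt_congr G v₀ (elemAt_inj G v₀ hjj)
    · -- the representative tuple is guarded
      refine ⟨?_, n, R, fun i' => elemAt G v₀ (cwNode G v₀ v) (d i') (hd i'), ?_, ?_⟩
      · obtain ⟨y, j, rfl⟩ := hne
        exact ⟨_, j, rfl⟩
      · exact relMap_of_rel G v₀ R (t := cwNode G v₀ v) (fun i' => hd i') hrel
      · rintro y ⟨j, rfl⟩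
        exact ⟨i j, rfl⟩
    · -- guarded bisimilarity
      refine ⟨bigZ G v₀, pIso G v₀ v (cwNode G v₀ v) rfl (Set.range fun j => d (i j)),
        ⟨v, cwNode G v₀ v, rfl, Set.range fun j => d (i j), rfl⟩, ?_, ?_⟩
      · ext y
        constructor
        · rintro ⟨c, hc, ⟨j, rfl⟩, rfl⟩
          exact ⟨j, ha j⟩
        · rintro ⟨j, rfl⟩
          exact ⟨d (i j), hd (i j), ⟨j, rfl⟩, ha j⟩
      · intro j
        rw [pIso_toFun, ha j]
        exact mapFun_elem G v₀ v (cwNode G v₀ v) rfl _ (hd (i j)) (hd (i j)) ⟨j, rfl⟩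

end GFPaper
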